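/- Let k be an algebraically closed field of characteristic 2, V a k-vector space of dimension 2m (m ≥ 2), and q : V → k a quadratic form with polar form A(x,y) = q(x+y) + q(x) + q(y). Let N = {x ∈ V : A(x,y) = 0 for all y ∈ V} be the null space of A. Assume dim N = 2 and that the set of singular vectors of N, namely N_0 = {x ∈ N : q(x) = 0}, is a 1-dimensional subspace. Let W ⊆ V be a totally singular subspace of dimension m containing N_0. Then there exists a basis e_1,…,e_m,f_1,…,f_m of V such that e_1,…,e_m is a basis of W, the span of f_2,…,f_m is totally singular for q, A(e_i,f_j) = δ_{ij} for all i,j = 2,…,m, e_1 spans N_0, and {e_1,f_1} is a basis of N. -/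

import Mathlib

open Module Submodule QuadraticMap

theorem stmt_1 (k : Type*) [Field k] [IsAlgClosed k] [CharP k 2]
    (V : Type*) [AddCommGroup V] [Module k V] [FiniteDimensional k V]
    (m : ℕ) [NeZero m] (hm : 2 ≤ m) (hdim : Module.finrank k V = 2 * m)
    (q : QuadraticForm k V)
    (N : Submodule k V)
    (hN : ∀ x : V, x ∈ N ↔ ∀ y : V, QuadraticMap.polar (⇑q) x y = 0)
    (hNdim : Module.finrank k N = 2)
    (N0 : Submodule k V)
    (hN0 : (N0 : Set V) = {x : V | x ∈ N ∧ q x = 0})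
    (hN0dim : Module.finrank k N0 = 1)
    (W : Submodule k V) (hW : ∀ x ∈ W, q x = 0)
    (hWdim : Module.finrank k W = m)
    (hN0W : N0 ≤ W) :
    ∃ e f : Fin m → V,
      LinearIndependent k (Sum.elim e f) ∧
      Submodule.span k (Set.range (Sum.elim e f)) = ⊤ ∧
      Submodule.span k (Set.range e) = W ∧
      (∀ x ∈ Submodule.span k (f '' {j : Fin m | j ≠ 0}), q x = 0) ∧
      (∀ i j : Fin m, i ≠ 0 → j ≠ 0 →
        QuadraticMap.polar (⇑q) (e i) (f j) = if i = j then 1 else 0) ∧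
      Submodule.span k ({e 0} : Set V) = N0 ∧
      Submodule.span k ({e 0, f 0} : Set V) = N := by
  classical
  -- basic helpers
  have char2 : ∀ a : k, a + a = 0 := CharTwo.add_self_eq_zero
  have hsym : ∀ x y : V, polar (⇑q) x y = polar (⇑q) y x := fun x y => polar_comm _ x y
  have hq_add : ∀ x y : V, q (x + y) = q x + q y + polar (⇑q) x y :=
    fun x y => QuadraticMap.map_add (⇑q) x y
  have hNpolar : ∀ x ∈ N, ∀ y, polar (⇑q) x y = 0 := fun x hx y => (hN x).1 hx y
  have hmemN0 : ∀ x : V, x ∈ N0 ↔ x ∈ N ∧ q x = 0 := by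
    intro x
    have := Set.ext_iff.mp hN0 x
    simpa using this
  have hN0N : N0 ≤ N := fun x hx => ((hmemN0 x).1 hx).1
  have hWpolar : ∀ x ∈ W, ∀ y ∈ W, polar (⇑q) x y = 0 := by
    intro x hx y hy
    simp [QuadraticMap.polar, hW _ (W.add_mem hx hy), hW _ hx, hW _ hy]
  have hpolar_self : ∀ x : V, polar (⇑q) x x = 0 := by
    intro x
    rw [polar_self, two_smul]
    exact char2 _
  -- sum expansion helpers
  have hsum_left : ∀ (n : ℕ) (c : Fin n → k) (v : Fin n → V) (y : V),
      polar (⇑q) (∑ i, c i • v i) y = ∑ i, c i * polar (⇑q) (v i) y := by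
    intro n c v y
    simp only [← polarBilin_apply_apply, map_sum, LinearMap.map_smul, LinearMap.sum_apply,
      LinearMap.smul_apply, smul_eq_mul]
  have hsum_right : ∀ (n : ℕ) (c : Fin n → k) (v : Fin n → V) (y : V),
      polar (⇑q) y (∑ i, c i • v i) = ∑ i, c i * polar (⇑q) y (v i) := by
    intro n c v y
    rw [hsym, hsum_left]
    exact Finset.sum_congr rfl fun i _ => by rw [hsym]
  -- pick v0 spanning N0
  have hN0ne : N0 ≠ ⊥ := by
    intro h
    rw [h, finrank_bot] at hN0dim
    omega
  obtain ⟨v0, hv0N0, hv0ne⟩ := Submodule.exists_mem_ne_zero_of_ne_bot hN0ne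
  have hN0span : Submodule.span k ({v0} : Set V) = N0 := by
    apply Submodule.eq_of_le_of_finrank_le
    · exact (Submodule.span_le).mpr (by simpa using hv0N0)
    · rw [hN0dim, finrank_span_singleton hv0ne]
  -- pick f0 ∈ N \ N0
  have hN0ltN : N0 < N := by
    apply lt_of_le_of_ne hN0N
    intro h
    rw [h, hNdim] at hN0dim
    omega
  obtain ⟨f0, hf0N, hf0not⟩ := SetLike.exists_of_lt hN0ltN
  have hqf0 : q f0 ≠ 0 := fun h => hf0not ((hmemN0 f0).2 ⟨hf0N, h⟩)
  have hf0ne : f0 ≠ 0 := by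
    intro h
    apply hqf0
    rw [h, map_zero]
  -- pair independence of v0 f0
  have pairind : ∀ a b : k, a • v0 + b • f0 = 0 → a = 0 ∧ b = 0 := by
    intro a b hab
    have hb : b = 0 := by
      by_contra hbne
      apply hf0not
      rw [← hN0span]
      rw [Submodule.mem_span_singleton]
      refine ⟨b⁻¹ * (- a), ?_⟩
      have h1 : b • f0 = (-a) • v0 := by
        rw [neg_smul]
        rw [eq_neg_iff_add_eq_zero, add_comm]
        exact hab
      rw [mul_smul, ← h1, inv_smul_smul₀ hbne]
    rw [hb, zero_smul, add_zero] at hab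
    exact ⟨(smul_eq_zero.mp hab).resolve_right hv0ne, hb⟩
  -- destructure m
  obtain ⟨m', rfl⟩ : ∃ m', m = m' + 1 := ⟨m - 1, (Nat.succ_pred_eq_of_pos (NeZero.pos m)).symm⟩
  -- complement of N0 inside W
  set p : Submodule k ↥W := N0.comap W.subtype with hp
  obtain ⟨C, hC⟩ := Submodule.exists_isCompl p
  have hpdim : finrank k ↥p = 1 := by
    rw [LinearEquiv.finrank_eq (Submodule.comapSubtypeEquivOfLe hN0W)]
    exact hN0dim
  have hCdim : finrank k ↥C = m' := by
    have := Submodule.finrank_add_eq_of_isCompl hC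
    rw [hpdim, hWdim] at this
    omega
  let cb : Basis (Fin m') k ↥C := finBasisOfFinrankEq k ↥C hCdim
  let e' : Fin m' → V := fun i => ((cb i : ↥W) : V)
  have he'W : ∀ i, e' i ∈ W := fun i => ((cb i : ↥W)).2
  have he'eq : e' = ⇑(W.subtype.comp C.subtype) ∘ ⇑cb := rfl
  have hker : LinearMap.ker (W.subtype.comp C.subtype) = ⊥ :=
    LinearMap.ker_eq_bot.mpr (W.injective_subtype.comp C.injective_subtype)
  have he'ind : LinearIndependent k e' := by
    rw [he'eq]
    exact cb.linearIndependent.map' _ hker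
  have he'span : Submodule.span k (Set.range e') = Submodule.map W.subtype C := by
    rw [he'eq, Set.range_comp, ← Submodule.map_span, cb.span_eq, Submodule.map_top,
      LinearMap.range_comp, Submodule.range_subtype]
  have he'memC : ∀ i, e' i ∈ Submodule.map W.subtype C := fun i =>
    ⟨cb i, (cb i).2, rfl⟩
  have hN0C : N0 ⊓ Submodule.map W.subtype C = ⊥ := by
    have h1 : Submodule.map W.subtype p = N0 := by
      rw [hp, Submodule.map_comap_subtype, inf_eq_right.mpr hN0W]
    rw [← h1, ← Submodule.map_inf _ W.injective_subtype, disjoint_iff.mp hC.disjoint,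
      Submodule.map_bot]
  -- dual family
  let Φ : V →ₗ[k] (Fin m' → k) := LinearMap.pi (fun i => polarBilin q (e' i))
  have hΦ : ∀ (x : V) (i : Fin m'), Φ x i = polar (⇑q) (e' i) x := by
    intro x i
    simp [Φ, polarBilin_apply_apply]
  have hsurj : Function.Surjective Φ := by
    rw [← LinearMap.range_eq_top]
    by_contra hne
    obtain ⟨φ, hφne, hφ⟩ :=
      Submodule.exists_dual_map_eq_bot_of_lt_top (lt_top_iff_ne_top.mpr hne) inferInstance
    set a : Fin m' → k := fun i => φ (Pi.single i 1) with ha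
    have hφ_eq : ∀ c : Fin m' → k, φ c = ∑ i, c i * a i := by
      intro c
      have hc : c = ∑ i, c i • (Pi.single i 1 : Fin m' → k) := by
        funext j
        simp [Pi.single_apply]
      conv_lhs => rw [hc]
      rw [_root_.map_sum]
      exact Finset.sum_congr rfl fun i _ => by rw [LinearMap.map_smul, smul_eq_mul]
    have hφ0 : ∀ v : V, φ (Φ v) = 0 := by
      intro v
      have : φ (Φ v) ∈ Submodule.map φ (LinearMap.range Φ) :=
        ⟨Φ v, LinearMap.mem_range_self _ v, rfl⟩
      rw [hφ] at this
      exact (Submodule.mem_bot k).mp this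
    set u : V := ∑ i, a i • e' i with hu
    have huN : u ∈ N := by
      rw [hN]
      intro y
      rw [hu, hsum_left]
      have := hφ0 y
      rw [hφ_eq] at this
      rw [← this]
      exact Finset.sum_congr rfl fun i _ => by rw [hΦ, mul_comm]
    have huW : u ∈ W := Submodule.sum_mem _ fun i _ => Submodule.smul_mem _ _ (he'W i)
    have huN0 : u ∈ N0 := (hmemN0 u).2 ⟨huN, hW u huW⟩
    have huC : u ∈ Submodule.map W.subtype C :=
      Submodule.sum_mem _ fun i _ => Submodule.smul_mem _ _ (he'memC i)
    have hu0 : u = 0 := by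
      have : u ∈ N0 ⊓ Submodule.map W.subtype C := ⟨huN0, huC⟩
      rw [hN0C] at this
      simpa using this
    have hsum0 : ∑ i, a i • e' i = 0 := by rw [← hu]; exact hu0
    have ha0 : ∀ i, a i = 0 := Fintype.linearIndependent_iff.mp he'ind a hsum0
    apply hφne
    apply LinearMap.ext
    intro c
    rw [hφ_eq]
    simp [ha0]
  have hgex := fun j : Fin m' => hsurj (Pi.single j 1)
  choose g hg using hgex
  have hgδ : ∀ i j : Fin m', polar (⇑q) (e' i) (g j) = if i = j then 1 else 0 := by
    intro i j
    have := congrFun (hg j) i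
    rw [hΦ] at this
    rw [this, Pi.single_apply]
  -- Gram-Schmidt correction
  set c : Fin m' → Fin m' → k := fun j i => if i < j then polar (⇑q) (g j) (g i) else 0 with hc
  set h : Fin m' → V := fun j => g j + ∑ i, c j i • e' i with hh
  have hBhe : ∀ j i, polar (⇑q) (h j) (e' i) = if i = j then 1 else 0 := by
    intro j i
    rw [hh]
    simp only
    rw [polar_add_left, hsum_left]
    rw [hsym (g j) (e' i), hgδ]
    have : ∀ l, c j l * polar (⇑q) (e' l) (e' i) = 0 := fun l => by
      rw [hWpolar _ (he'W l) _ (he'W i), mul_zero]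
    rw [Finset.sum_congr rfl fun l _ => this l, Finset.sum_const_zero, add_zero]
  have hBhg : ∀ j l, polar (⇑q) (h j) (g l) = polar (⇑q) (g j) (g l) + c j l := by
    intro j l
    rw [hh]
    simp only
    rw [polar_add_left, hsum_left]
    congr 1
    rw [Finset.sum_congr rfl fun i _ => by rw [hgδ]]
    simp [Finset.sum_ite_eq]
  have hBhh : ∀ j l, polar (⇑q) (h j) (h l) = 0 := by
    intro j l
    conv_lhs => rw [show h l = g l + ∑ i, c l i • e' i from rfl]
    rw [polar_add_right, hsum_right, hBhg]
    rw [Finset.sum_congr rfl fun i _ => by rw [hBhe]]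
    have hsum : (∑ i, c l i * if i = j then 1 else 0) = c l j := by
      simp [Finset.sum_ite_eq]
    rw [hsum]
    rcases lt_trichotomy j l with hjl | hjl | hjl
    · have h1 : c j l = 0 := by rw [hc]; simp [not_lt_of_gt hjl]
      have h2 : c l j = polar (⇑q) (g l) (g j) := by rw [hc]; simp [hjl]
      rw [h1, h2, add_zero, hsym (g l) (g j)]
      exact char2 _
    · subst hjl
      have h1 : c j j = 0 := by rw [hc]; simp
      rw [h1, add_zero, add_zero, hpolar_self]
    · have h1 : c j l = polar (⇑q) (g j) (g l) := by rw [hc]; simp [hjl]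
      have h2 : c l j = 0 := by rw [hc]; simp [not_lt_of_gt hjl]
      rw [h1, h2, add_zero]
      exact char2 _
  have hBhf0 : ∀ j, polar (⇑q) (h j) f0 = 0 := fun j => by
    rw [hsym]; exact hNpolar f0 hf0N _
  -- scale to kill q values
  have hsex := fun j : Fin m' => IsAlgClosed.exists_pow_nat_eq (q (h j) / q f0) (n := 2) two_pos
  choose s hs using hsex
  set f' : Fin m' → V := fun j => h j + s j • f0 with hf'
  have hqf' : ∀ j, q (f' j) = 0 := by
    intro j
    rw [hf']
    simp only
    rw [hq_add, polar_smul_right, hBhf0, smul_zero, add_zero, QuadraticMap.map_smul,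
      smul_eq_mul, ← pow_two, hs, div_mul_cancel₀ _ hqf0]
    exact char2 _
  have hBf'f' : ∀ i j, polar (⇑q) (f' i) (f' j) = 0 := by
    intro i j
    rw [hf']
    simp only
    simp only [polar_add_left, polar_add_right, polar_smul_left, polar_smul_right, hBhh,
      hBhf0, hNpolar f0 hf0N, smul_zero, add_zero, zero_add]
  have hBef' : ∀ i j, polar (⇑q) (e' i) (f' j) = if i = j then 1 else 0 := by
    intro i j
    rw [hf']
    simp only
    rw [polar_add_right, polar_smul_right, hsym (e' i) (h j), hBhe, hsym (e' i) f0,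
      hNpolar f0 hf0N, smul_zero, add_zero]
  have hBf'e' : ∀ i j, polar (⇑q) (f' i) (e' j) = if i = j then 1 else 0 := by
    intro i j
    rw [hsym, hBef']
    simp [eq_comm]
  have hf'W : ∀ i j, polar (⇑q) (f' i) (f' j) = 0 := hBf'f'
  -- assemble
  have hWee : ∀ i j, polar (⇑q) (e' i) (e' j) = 0 := fun i j =>
    hWpolar _ (he'W i) _ (he'W j)
  have hv0N : v0 ∈ N := hN0N hv0N0
  -- linear independence of the combined family
  have hind : LinearIndependent k (Sum.elim (Fin.cons v0 e') (Fin.cons f0 f')) := by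
    rw [Fintype.linearIndependent_iff]
    intro gc hgc
    have htot : (∑ i, gc (Sum.inl i) • (Fin.cons v0 e' : Fin (m' + 1) → V) i)
        + (∑ i, gc (Sum.inr i) • (Fin.cons f0 f' : Fin (m' + 1) → V) i) = 0 := by
      rw [← hgc, Fintype.sum_sum_type]
      rfl
    have hz : ∀ z : V, (∑ i, gc (Sum.inl i) * polar (⇑q) ((Fin.cons v0 e' : Fin (m' + 1) → V) i) z)
        + (∑ i, gc (Sum.inr i) * polar (⇑q) ((Fin.cons f0 f' : Fin (m' + 1) → V) i) z) = 0 := by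
      intro z
      rw [← hsum_left, ← hsum_left, ← polar_add_left, htot, polar_zero_left]
    have hinlsucc : ∀ j : Fin m', gc (Sum.inl j.succ) = 0 := by
      intro j
      have h1 := hz (f' j)
      rw [Fin.sum_univ_succ, Fin.sum_univ_succ] at h1
      simp only [Fin.cons_zero, Fin.cons_succ, hNpolar v0 hv0N, hNpolar f0 hf0N,
        hBef', hBf'f', mul_zero, mul_ite, mul_one, Finset.sum_const_zero, add_zero,
        zero_add, Finset.sum_ite_eq', Finset.mem_univ, if_true] at h1
      exact h1
    have hinrsucc : ∀ j : Fin m', gc (Sum.inr j.succ) = 0 := by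
      intro j
      have h1 := hz (e' j)
      rw [Fin.sum_univ_succ, Fin.sum_univ_succ] at h1
      simp only [Fin.cons_zero, Fin.cons_succ, hNpolar v0 hv0N, hNpolar f0 hf0N,
        hWee, hBf'e', mul_zero, mul_ite, mul_one, Finset.sum_const_zero, add_zero,
        zero_add, Finset.sum_ite_eq', Finset.mem_univ, if_true] at h1
      exact h1
    have h0 : gc (Sum.inl 0) • v0 + gc (Sum.inr 0) • f0 = 0 := by
      have h1 := htot
      rw [Fin.sum_univ_succ, Fin.sum_univ_succ] at h1
      simp only [Fin.cons_zero, Fin.cons_succ, hinlsucc, hinrsucc, zero_smul,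
        Finset.sum_const_zero, add_zero] at h1
      exact h1
    obtain ⟨ha, hb⟩ := pairind _ _ h0
    rintro (i | i)
    · induction i using Fin.cases with
      | zero => exact ha
      | succ i' => exact hinlsucc i'
    · induction i using Fin.cases with
      | zero => exact hb
      | succ i' => exact hinrsucc i'
  -- span of e is W
  have hspanW : Submodule.span k (Set.range (Fin.cons v0 e' : Fin (m' + 1) → V)) = W := by
    rw [Fin.range_cons, Submodule.span_insert, he'span, hN0span]
    have h1 : Submodule.map W.subtype p = N0 := by
      rw [hp, Submodule.map_comap_subtype, inf_eq_right.mpr hN0W]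
    rw [← h1, ← Submodule.map_sup, codisjoint_iff.mp hC.codisjoint, Submodule.map_top,
      Submodule.range_subtype]
  refine ⟨Fin.cons v0 e', Fin.cons f0 f', hind, ?_, hspanW, ?_, ?_, ?_, ?_⟩
  · -- spans everything
    apply Submodule.eq_top_of_finrank_eq
    rw [finrank_span_eq_card hind, hdim]
    simp only [Fintype.card_sum, Fintype.card_fin]
    omega
  · -- totally singular part
    intro x hx
    set S := (Fin.cons f0 f' : Fin (m' + 1) → V) '' {j : Fin (m' + 1) | j ≠ 0} with hS
    have hSq : ∀ y ∈ S, q y = 0 := by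
      rintro y ⟨j, hj, rfl⟩
      obtain ⟨j', rfl⟩ := Fin.exists_succ_eq_of_ne_zero hj
      rw [Fin.cons_succ]
      exact hqf' j'
    have hSpolar1 : ∀ y ∈ S, ∀ z ∈ Submodule.span k S, polar (⇑q) y z = 0 := by
      rintro y ⟨j, hj, rfl⟩ z hz
      obtain ⟨j', rfl⟩ := Fin.exists_succ_eq_of_ne_zero hj
      induction hz using Submodule.span_induction with
      | mem w hw =>
        obtain ⟨l, hl, rfl⟩ := hw
        obtain ⟨l', rfl⟩ := Fin.exists_succ_eq_of_ne_zero hl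
        rw [Fin.cons_succ, Fin.cons_succ]
        exact hBf'f' _ _
      | zero => exact polar_zero_right _ _
      | add a b _ _ ha hb => rw [polar_add_right, ha, hb, add_zero]
      | smul t a _ ha => rw [polar_smul_right, ha, smul_zero]
    have hSpolar : ∀ a ∈ Submodule.span k S, ∀ b ∈ Submodule.span k S, polar (⇑q) a b = 0 := by
      intro a ha
      induction ha using Submodule.span_induction with
      | mem y hy => exact hSpolar1 y hy
      | zero => intro b hb; exact polar_zero_left _ _
      | add x y hx hy hx' hy' => intro b hb; rw [polar_add_left, hx' b hb, hy' b hb, add_zero]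
      | smul t x hx hx' => intro b hb; rw [polar_smul_left, hx' b hb, smul_zero]
    induction hx using Submodule.span_induction with
    | mem y hy => exact hSq y hy
    | zero => exact map_zero q
    | add a b ha hb ha' hb' => rw [hq_add, ha', hb', hSpolar a ha b hb, add_zero, add_zero]
    | smul t a ha ha' => rw [QuadraticMap.map_smul, ha', smul_zero]
  · -- polar pairing
    intro i j hi hj
    obtain ⟨i', rfl⟩ := Fin.exists_succ_eq_of_ne_zero hi
    obtain ⟨j', rfl⟩ := Fin.exists_succ_eq_of_ne_zero hj
    rw [Fin.cons_succ, Fin.cons_succ, hBef']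
    simp [Fin.succ_inj]
  · -- span of e 0 is N0
    simp only [Fin.cons_zero]
    exact hN0span
  · -- span of {e 0, f 0} is N
    simp only [Fin.cons_zero]
    have hfin2 : LinearIndependent k ![v0, f0] := by
      rw [linearIndependent_fin2]
      constructor
      · simpa using hf0ne
      · intro a ha
        simp only [Matrix.cons_val_one, Matrix.head_cons, Matrix.cons_val_zero] at ha
        have hane : a ≠ 0 := by
          intro h
          rw [h, zero_smul] at ha
          exact hv0ne ha.symm
        apply hf0not
        have : f0 = a⁻¹ • v0 := by rw [← ha, inv_smul_smul₀ hane]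
        rw [this]
        exact N0.smul_mem _ hv0N0
    have hrange : ({v0, f0} : Set V) = Set.range ![v0, f0] := by
      ext x
      simp [Fin.exists_fin_two, or_comm]
    apply Submodule.eq_of_le_of_finrank_le
    · rw [Submodule.span_le]
      rintro x (rfl | rfl)
      · exact hv0N
      · exact hf0N
    · rw [hNdim, hrange, finrank_span_eq_card hfin2]
      simp
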